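/- Let R = F[[π]] be the power series ring over a finite field F with |F| > 3. Then SL(2,R) equals its own commutator subgroup. -/

import Mathlib

open Matrix
open scoped commutatorElement
namespace Stmt11Aux
variable {R : Type*} [CommRing R]

def Em (t : R) : SpecialLinearGroup (Fin 2) R :=
  ⟨!![1, t; 0, 1], by simp [Matrix.det_fin_two_of]⟩
def Em' (t : R) : SpecialLinearGroup (Fin 2) R :=
  ⟨!![1, 0; t, 1], by simp [Matrix.det_fin_two_of]⟩
def Dm (u v : R) (h : u * v = 1) : SpecialLinearGroup (Fin 2) R :=
  ⟨!![u, 0; 0, v], by simp [Matrix.det_fin_two_of, h]⟩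

lemma Em_mul (s t : R) : Em s * Em t = Em (s + t) := by
  apply Subtype.ext
  rw [Matrix.SpecialLinearGroup.coe_mul]
  simp [Em, Matrix.SpecialLinearGroup.coe_mul, Matrix.mul_fin_two, add_comm]
lemma Em'_mul (s t : R) : Em' s * Em' t = Em' (s + t) := by
  apply Subtype.ext
  rw [Matrix.SpecialLinearGroup.coe_mul]
  simp [Em', Matrix.SpecialLinearGroup.coe_mul, Matrix.mul_fin_two, add_comm]
lemma Em_zero : (Em 0 : SpecialLinearGroup (Fin 2) R) = 1 := by
  apply Subtype.ext
  simp [Em, Matrix.SpecialLinearGroup.coe_one, Matrix.one_fin_two]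
lemma Em'_zero : (Em' 0 : SpecialLinearGroup (Fin 2) R) = 1 := by
  apply Subtype.ext
  simp [Em', Matrix.SpecialLinearGroup.coe_one, Matrix.one_fin_two]
lemma Em_inv (t : R) : (Em t)⁻¹ = Em (-t) := by
  apply inv_eq_of_mul_eq_one_right; rw [Em_mul]; simp [Em_zero]
lemma Em'_inv (t : R) : (Em' t)⁻¹ = Em' (-t) := by
  apply inv_eq_of_mul_eq_one_right; rw [Em'_mul]; simp [Em'_zero]
lemma Dm_inv (u v : R) (h : u * v = 1) :
    (Dm u v h)⁻¹ = Dm v u (by rw [mul_comm]; exact h) := by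
  apply inv_eq_of_mul_eq_one_right
  apply Subtype.ext
  rw [Matrix.SpecialLinearGroup.coe_mul]
  simp [Dm, Matrix.SpecialLinearGroup.coe_mul, Matrix.mul_fin_two,
    Matrix.SpecialLinearGroup.coe_one, Matrix.one_fin_two, mul_comm v u, h]

lemma comm_Em (u v s : R) (h : u * v = 1) :
    ⁅Dm u v h, Em s⁆ = Em (s * (u^2 - 1)) := by
  rw [commutatorElement_def, Dm_inv, Em_inv]
  apply Subtype.ext
  rw [Matrix.SpecialLinearGroup.coe_mul, Matrix.SpecialLinearGroup.coe_mul, Matrix.SpecialLinearGroup.coe_mul]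
  simp only [Em, Dm, Matrix.SpecialLinearGroup.coe_mul, Matrix.mul_fin_two]
  ext i j
  fin_cases i <;> fin_cases j <;> simp <;> first
    | linear_combination h
    | linear_combination (-s) * h

lemma comm_Em' (u v s : R) (h : u * v = 1) :
    ⁅Dm u v h, Em' s⁆ = Em' (s * (v^2 - 1)) := by
  rw [commutatorElement_def, Dm_inv, Em'_inv]
  apply Subtype.ext
  rw [Matrix.SpecialLinearGroup.coe_mul, Matrix.SpecialLinearGroup.coe_mul, Matrix.SpecialLinearGroup.coe_mul]
  simp only [Em', Dm, Matrix.SpecialLinearGroup.coe_mul, Matrix.mul_fin_two]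
  ext i j
  fin_cases i <;> fin_cases j <;> simp <;> first
    | linear_combination h
    | linear_combination (-s) * h

end Stmt11Aux

namespace Stmt11Aux
variable {R : Type*} [CommRing R]

lemma mem_of_unit_corner (S : Subgroup (SpecialLinearGroup (Fin 2) R))
    (hE : ∀ t : R, Em t ∈ S) (hE' : ∀ t : R, Em' t ∈ S)
    (A : SpecialLinearGroup (Fin 2) R) (hc : IsUnit (A.1 1 0)) : A ∈ S := by
  obtain ⟨cu, hcu⟩ := hc
  set a := A.1 0 0 with ha
  set b := A.1 0 1 with hb
  set c := A.1 1 0 with hc0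
  set d := A.1 1 1 with hd
  set ci : R := ((cu⁻¹ : Rˣ) : R) with hci0
  have hci : c * ci = 1 := by rw [← hcu, hci0, ← Units.val_mul]; simp
  have hdet : a * d - b * c = 1 := by
    have h2 := A.2
    rw [Matrix.det_fin_two] at h2
    exact h2
  have hA : A = Em ((a - 1) * ci) * Em' c * Em ((d - 1) * ci) := by
    apply Subtype.ext
    have hAeta : (A : Matrix (Fin 2) (Fin 2) R) = !![a, b; c, d] := by
      rw [ha, hb, hc0, hd]; exact Matrix.eta_fin_two _
    rw [hAeta, Matrix.SpecialLinearGroup.coe_mul, Matrix.SpecialLinearGroup.coe_mul]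
    simp only [Em, Em', Matrix.SpecialLinearGroup.coe_mul, Matrix.mul_fin_two]
    ext i j
    fin_cases i <;> fin_cases j <;> simp <;>
      first
      | linear_combination (-(a - 1)) * hci
      | linear_combination (-(d - 1)) * hci
      | linear_combination (-(b + (a-1)*(d-1)*ci)) * hci + (-ci) * hdet
  rw [hA]
  exact S.mul_mem (S.mul_mem (hE _) (hE' _)) (hE _)

lemma mem_of_all [IsLocalRing R] (S : Subgroup (SpecialLinearGroup (Fin 2) R))
    (hE : ∀ t : R, Em t ∈ S) (hE' : ∀ t : R, Em' t ∈ S)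
    (A : SpecialLinearGroup (Fin 2) R) : A ∈ S := by
  by_cases hc : IsUnit (A.1 1 0)
  · exact mem_of_unit_corner S hE hE' A hc
  · have ha : IsUnit (A.1 0 0) := by
      by_contra ha
      have h2 := A.2
      rw [Matrix.det_fin_two] at h2
      have hmem : A.1 0 0 * A.1 1 1 - A.1 0 1 * A.1 1 0 ∈ IsLocalRing.maximalIdeal R := by
        apply Ideal.sub_mem
        · exact Ideal.mul_mem_right _ _ ((IsLocalRing.mem_maximalIdeal _).2 (mem_nonunits_iff.2 ha))
        · exact Ideal.mul_mem_left _ _ ((IsLocalRing.mem_maximalIdeal _).2 (mem_nonunits_iff.2 hc))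
      rw [h2] at hmem
      exact mem_nonunits_iff.1 ((IsLocalRing.mem_maximalIdeal _).1 hmem) isUnit_one
    set B := Em' 1 * A with hB
    have hBc : B.1 1 0 = A.1 0 0 + A.1 1 0 := by
      rw [hB, Matrix.SpecialLinearGroup.coe_mul]
      simp [Em', Matrix.SpecialLinearGroup.coe_mul, Matrix.mul_apply, Fin.sum_univ_two]
    have hBu : IsUnit (B.1 1 0) := by
      rw [hBc]
      rcases IsLocalRing.isUnit_or_isUnit_of_isUnit_add
          (a := A.1 0 0 + A.1 1 0) (b := -(A.1 1 0)) (by simpa using ha) with h | h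
      · exact h
      · exact absurd (by simpa using h) hc
    have hBS : B ∈ S := mem_of_unit_corner S hE hE' B hBu
    have : A = (Em' 1)⁻¹ * B := by rw [hB]; group
    rw [this, Em'_inv]
    exact S.mul_mem (hE' _) hBS

end Stmt11Aux

/-- For `R = F[[π]]` with `F` finite, `|F| > 3`, the group `SL(2,R)` is its own
commutator subgroup. -/
theorem stmt11 (F : Type*) [Field F] [Fintype F] (h : 3 < Fintype.card F) :
    commutator (Matrix.SpecialLinearGroup (Fin 2) (PowerSeries F)) = ⊤ := by
  classical
  -- find u0 : F with u0^3 ≠ u0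
  obtain ⟨u0, hu0⟩ : ∃ u0 : F, u0 ^ 3 - u0 ≠ 0 := by
    obtain ⟨r, hr⟩ := Polynomial.exists_eval_ne_zero_of_natDegree_lt_card
      (Polynomial.X ^ 3 - Polynomial.X : Polynomial F)
      (fun hzero => by
        have : (Polynomial.X ^ 3 - Polynomial.X : Polynomial F).coeff 3 = 1 := by
          simp [Polynomial.coeff_X]
        rw [hzero] at this
        simp at this)
      (by
        have hdeg : (Polynomial.X ^ 3 - Polynomial.X : Polynomial F).natDegree = 3 := by
          compute_degree!
        rw [hdeg, Cardinal.mk_fintype]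
        exact_mod_cast Nat.cast_lt.2 h)
    exact ⟨r, by simpa using hr⟩
  have hne0 : u0 ≠ 0 := fun hz => by simp [hz] at hu0
  have hsq : u0 ^ 2 - 1 ≠ 0 := fun hz => by
    apply hu0
    have : u0 ^ 2 = 1 := by linear_combination hz
    calc u0 ^ 3 - u0 = u0 ^ 2 * u0 - u0 := by ring
    _ = 0 := by rw [this]; ring
  have hsqi : (u0⁻¹) ^ 2 - 1 ≠ 0 := fun hz => by
    apply hsq
    have h1 : (u0⁻¹) ^ 2 = 1 := by linear_combination hz
    have : u0 ^ 2 * (u0⁻¹) ^ 2 = 1 := by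
      field_simp
    rw [h1, mul_one] at this
    rw [this]; ring
  set R := PowerSeries F
  set φ := (PowerSeries.C : F →+* R) with hφ
  set u : R := φ u0 with hu
  set v : R := φ u0⁻¹ with hv
  have huv : u * v = 1 := by
    rw [hu, hv, ← _root_.map_mul, mul_inv_cancel₀ hne0, _root_.map_one]
  have hw1 : IsUnit (u ^ 2 - 1) := by
    have : u ^ 2 - 1 = φ (u0 ^ 2 - 1) := by rw [hu, map_sub, map_pow, _root_.map_one]
    rw [this]
    exact (isUnit_iff_ne_zero.2 hsq).map φ
  have hw2 : IsUnit (v ^ 2 - 1) := by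
    have : v ^ 2 - 1 = φ (u0⁻¹ ^ 2 - 1) := by rw [hv, map_sub, map_pow, _root_.map_one]
    rw [this]
    exact (isUnit_iff_ne_zero.2 hsqi).map φ
  obtain ⟨w1, hw1e⟩ := hw1
  obtain ⟨w2, hw2e⟩ := hw2
  have hE : ∀ t : R, Stmt11Aux.Em t ∈ commutator (Matrix.SpecialLinearGroup (Fin 2) R) := by
    intro t
    have key := Stmt11Aux.comm_Em u v (t * ((w1⁻¹ : Rˣ) : R)) huv
    have harg : t * ((w1⁻¹ : Rˣ) : R) * (u ^ 2 - 1) = t := by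
      rw [← hw1e, mul_assoc, ← Units.val_mul]; simp
    rw [harg] at key
    rw [← key, commutator_def]
    exact Subgroup.commutator_mem_commutator (Subgroup.mem_top _) (Subgroup.mem_top _)
  have hE' : ∀ t : R, Stmt11Aux.Em' t ∈ commutator (Matrix.SpecialLinearGroup (Fin 2) R) := by
    intro t
    have key := Stmt11Aux.comm_Em' u v (t * ((w2⁻¹ : Rˣ) : R)) huv
    have harg : t * ((w2⁻¹ : Rˣ) : R) * (v ^ 2 - 1) = t := by
      rw [← hw2e, mul_assoc, ← Units.val_mul]; simp
    rw [harg] at key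
    rw [← key, commutator_def]
    exact Subgroup.commutator_mem_commutator (Subgroup.mem_top _) (Subgroup.mem_top _)
  rw [Subgroup.eq_top_iff']
  intro A
  exact Stmt11Aux.mem_of_all _ hE hE' A
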